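/- Let X be a simplicial set. If for every n ≥ 3 and every 0 < j < n the map X_n → X_{{0,j,j+1,...,n}} ×_{X_{{0,j}}} X_{{0,1,...,j}} induced by the corresponding inclusions of subsets of [n] is a bijection, then for every triangulation T of the (n+1)-gon in which every triangle contains the vertex 0, the induced 2-Segal map from X_n to the limit of X over the triangles and shared edges of T is a bijection. -/

import Mathlib

/-!
STATEMENT 3: Let `X` be a simplicial set.  If for every `n ≥ 3` and every `0 < j < n`
the map `X_n → X_{{0,j,j+1,…,n}} ×_{X_{{0,j}}} X_{{0,1,…,j}}` induced by the
corresponding inclusions of subsets of `[n]` is a bijection, then for every triangulation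
of the `(n+1)`-gon in which every triangle contains the vertex `0` — i.e. the fan
triangulation with triangles `{0,i,i+1}`, `i = 1,…,n-1` — the induced 2-Segal map from
`X_n` to the limit of `X` over the triangles and shared edges is a bijection.

Bijectivity onto a fibre product is expressed as injectivity together with surjectivity
onto the compatible tuples.
-/

open CategoryTheory Opposite Simplicial SimplexCategory

/-- The inclusion `{0, j, j+1, …, n} ⊆ [n]`, as a map `[n-j+1] → [n]` of `Δ`. -/
def incUpper (n j : ℕ) (hj : j ≤ n) : SimplexCategory.mk (n - j + 1) ⟶ SimplexCategory.mk n :=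
  SimplexCategory.mkHom
    ⟨fun i => ⟨if i.val = 0 then 0 else j + i.val - 1, by have := i.isLt; split <;> omega⟩,
     fun a b hab => by
      have ha := a.isLt; have hb := b.isLt
      have h := Fin.le_def.mp hab
      rw [Fin.le_def]
      dsimp
      split_ifs <;> omega⟩

/-- The inclusion `{0, 1, …, j} ⊆ [n]`, as a map `[j] → [n]` of `Δ`. -/
def incLower (n j : ℕ) (hj : j ≤ n) : SimplexCategory.mk j ⟶ SimplexCategory.mk n :=
  SimplexCategory.mkHom
    ⟨fun i => ⟨i.val, by have := i.isLt; omega⟩,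
     fun a b hab => by rw [Fin.le_def]; exact Fin.le_def.mp hab⟩

/-- The inclusion `{0, j} ⊆ {0, j, j+1, …, n}`, i.e. the vertices in positions `0, 1`. -/
def edgeUpper (n j : ℕ) : SimplexCategory.mk 1 ⟶ SimplexCategory.mk (n - j + 1) :=
  SimplexCategory.mkHom
    ⟨fun i => ⟨i.val, by have := i.isLt; omega⟩,
     fun a b hab => by rw [Fin.le_def]; exact Fin.le_def.mp hab⟩

/-- The inclusion `{0, j} ⊆ {0, 1, …, j}`, i.e. the vertices in positions `0, j`. -/
def edgeLower (n j : ℕ) : SimplexCategory.mk 1 ⟶ SimplexCategory.mk j :=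
  SimplexCategory.mkHom
    ⟨fun i => ⟨if i.val = 0 then 0 else j, by split <;> omega⟩,
     fun a b hab => by
      have h := Fin.le_def.mp hab
      rw [Fin.le_def]
      dsimp
      split_ifs <;> omega⟩

/-- The triangle `{0, i+1, i+2} ⊆ [n]` of the fan triangulation, as a map `[2] → [n]`. -/
def tri (n i : ℕ) (h : i + 2 ≤ n) : SimplexCategory.mk 2 ⟶ SimplexCategory.mk n :=
  SimplexCategory.mkHom
    ⟨fun v => ⟨if v.val = 0 then 0 else i + v.val, by have := v.isLt; split <;> omega⟩,
     fun a b hab => by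
      have h := Fin.le_def.mp hab
      rw [Fin.le_def]
      dsimp
      split_ifs <;> omega⟩

/-- If all the left 2-Segal maps
`X_n → X_{{0,j,…,n}} ×_{X_{{0,j}}} X_{{0,…,j}}` of a simplicial set `X` are bijections,
then the 2-Segal map associated to the fan triangulation (all of whose triangles contain
the vertex `0`) is a bijection onto the limit over the triangles and shared diagonals. -/
lemma val_eqToHom {a b : SimplexCategory} (h : a = b) (i : Fin (a.len + 1)) :
    ((eqToHom h).toOrderHom i).val = i.val := by
  subst h; rfl

lemma lemA (m i : ℕ) (h : i + 2 ≤ m) (h1 : m ≤ m + 1) (h2 : i + 2 ≤ m + 1) :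
    tri m i h ≫ incLower (m+1) m h1 = tri (m+1) i h2 := by
  apply SimplexCategory.Hom.ext
  ext v
  simp [tri, incLower, comp_toOrderHom]
  rfl

lemma lemB (m : ℕ) (hm : 2 ≤ m) (h : m - 2 + 2 ≤ m) :
    edgeLower (m+1) m = SimplexCategory.δ (1 : Fin 3) ≫ tri m (m-2) h := by
  apply SimplexCategory.Hom.ext
  ext v
  simp [tri, edgeLower, comp_toOrderHom, SimplexCategory.δ, Fin.succAbove]
  fin_cases v <;> simp <;> omega

lemma lemC (m : ℕ) (hm : 1 ≤ m) (h : SimplexCategory.mk (m+1-m+1) = SimplexCategory.mk 2)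
    (h1 : m ≤ m + 1) (h2 : m - 1 + 2 ≤ m + 1) :
    incUpper (m+1) m h1 = eqToHom h ≫ tri (m+1) (m-1) h2 := by
  apply SimplexCategory.Hom.ext
  ext v
  simp [tri, incUpper, comp_toOrderHom]
  have hw := val_eqToHom h v
  have := v.isLt
  split_ifs <;> omega

lemma lemD (m : ℕ) (h : SimplexCategory.mk (m+1-m+1) = SimplexCategory.mk 2) :
    edgeUpper (m+1) m ≫ eqToHom h = SimplexCategory.δ (2 : Fin 3) := by
  apply SimplexCategory.Hom.ext
  ext v
  simp [edgeUpper, comp_toOrderHom, SimplexCategory.δ, Fin.succAbove]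
  fin_cases v <;> simp
  · rfl
  · rfl

lemma lemE (h : 0 + 2 ≤ 2) : tri 2 0 h = 𝟙 _ := by
  apply SimplexCategory.Hom.ext
  ext v
  simp [tri]
  fin_cases v <;> simp
theorem fan_two_segal_map_bijective (X : SSet)
    (H : ∀ (n j : ℕ), 3 ≤ n → 0 < j → ∀ hj : j < n,
      Function.Injective (fun x : X.obj (op (SimplexCategory.mk n)) =>
        (X.map (incUpper n j hj.le).op x, X.map (incLower n j hj.le).op x)) ∧
      ∀ (a : X.obj (op (SimplexCategory.mk (n - j + 1))))
        (b : X.obj (op (SimplexCategory.mk j))),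
        X.map (edgeUpper n j).op a = X.map (edgeLower n j).op b →
          ∃ x, X.map (incUpper n j hj.le).op x = a ∧ X.map (incLower n j hj.le).op x = b)
    (n : ℕ) (hn : 2 ≤ n) :
    Function.Injective (fun x : X.obj (op (SimplexCategory.mk n)) =>
      fun i : Fin (n - 1) => X.map (tri n i.val (by have := i.isLt; omega)).op x) ∧
    ∀ y : (i : Fin (n - 1)) → X.obj (op (SimplexCategory.mk 2)),
      (∀ (i : ℕ) (h : i + 1 < n - 1),
        X.map (SimplexCategory.δ (2 : Fin 3)).op (y ⟨i + 1, h⟩) =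
          X.map (SimplexCategory.δ (1 : Fin 3)).op (y ⟨i, Nat.lt_of_succ_lt h⟩)) →
      ∃ x, ∀ i : Fin (n - 1),
        X.map (tri n i.val (by have := i.isLt; omega)).op x = y i := by

  induction n, hn using Nat.le_induction with
  | base =>
    constructor
    · intro x₁ x₂ hx
      have h0 : X.map (tri 2 0 (by omega)).op x₁ = X.map (tri 2 0 (by omega)).op x₂ :=
        congrFun hx ⟨0, by omega⟩
      rw [lemE] at h0
      simpa using h0
    · intro y _
      refine ⟨y ⟨0, by omega⟩, ?_⟩
      rintro ⟨iv, hlt⟩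
      have hiv : iv = 0 := by omega
      subst hiv
      rw [lemE]
      simp
  | succ m hm ih =>
    have h2 : SimplexCategory.mk (m+1-m+1) = SimplexCategory.mk 2 := by congr 1; omega
    obtain ⟨Hinj, Hsurj⟩ := H (m+1) m (by omega) (by omega) (by omega)
    obtain ⟨IHinj, IHsurj⟩ := ih
    set E : X.obj (op (SimplexCategory.mk 2)) → X.obj (op (SimplexCategory.mk (m+1-m+1))) :=
      ⇑(X.map (eqToHom h2).op) with hE
    have hEinj : Function.Injective E := by
      intro z₁ z₂ hz
      have : ∀ z, X.map (eqToHom h2.symm).op (E z) = z := by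
        intro z
        rw [hE, ← FunctorToTypes.map_comp_apply, ← op_comp, eqToHom_trans, eqToHom_refl,
          op_id, FunctorToTypes.map_id_apply]
      rw [← this z₁, ← this z₂, hz]
    have hCup : ∀ x : X.obj (op (SimplexCategory.mk (m+1))),
        X.map (incUpper (m+1) m (by omega)).op x
          = E (X.map (tri (m+1) (m-1) (by omega)).op x) := by
      intro x
      rw [lemC m (by omega) h2 (by omega) (by omega), op_comp, FunctorToTypes.map_comp_apply]
    have hLow : ∀ (x : X.obj (op (SimplexCategory.mk (m+1)))) (i : ℕ) (h : i + 2 ≤ m),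
        X.map (tri m i h).op (X.map (incLower (m+1) m (by omega)).op x)
          = X.map (tri (m+1) i (by omega)).op x := by
      intro x i h
      rw [← FunctorToTypes.map_comp_apply, ← op_comp, lemA m i h (by omega) (by omega)]
    constructor
    · intro x₁ x₂ hx
      apply Hinj
      have hup : X.map (incUpper (m+1) m (by omega : m ≤ m + 1)).op x₁
          = X.map (incUpper (m+1) m (by omega)).op x₂ := by
        rw [hCup, hCup]
        exact congrArg E (congrFun hx ⟨m-1, by omega⟩)
      have hlo : X.map (incLower (m+1) m (by omega : m ≤ m + 1)).op x₁
          = X.map (incLower (m+1) m (by omega)).op x₂ := by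
        apply IHinj
        funext i
        show X.map (tri m i.val _).op _ = X.map (tri m i.val _).op _
        rw [hLow x₁ i.val (by have := i.isLt; omega), hLow x₂ i.val (by have := i.isLt; omega)]
        exact congrFun hx ⟨i.val, by have := i.isLt; omega⟩
      exact Prod.ext hup hlo
    · intro y hy
      set y' : Fin (m - 1) → X.obj (op (SimplexCategory.mk 2)) :=
        fun i => y ⟨i.val, by have := i.isLt; omega⟩ with hy'def
      have hy'c : ∀ (i : ℕ) (h : i + 1 < m - 1),
          X.map (SimplexCategory.δ (2 : Fin 3)).op (y' ⟨i + 1, h⟩) =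
            X.map (SimplexCategory.δ (1 : Fin 3)).op (y' ⟨i, Nat.lt_of_succ_lt h⟩) :=
        fun i h => hy i (by omega)
      obtain ⟨b, hb⟩ := IHsurj y' hy'c
      have hedge : X.map (edgeUpper (m+1) m).op (E (y ⟨m-1, by omega⟩))
          = X.map (edgeLower (m+1) m).op b := by
        rw [hE, ← FunctorToTypes.map_comp_apply, ← op_comp, lemD m h2,
          lemB m hm (by omega), op_comp, FunctorToTypes.map_comp_apply]
        have hbm := hb ⟨m-2, by omega⟩
        rw [hbm]
        have := hy (m-2) (by omega)
        have hfin : (⟨m-2+1, by omega⟩ : Fin (m+1-1)) = ⟨m-1, by omega⟩ := by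
          apply Fin.ext; simp; omega
        rw [hfin] at this
        exact this
      obtain ⟨x, hxu, hxl⟩ := Hsurj (E (y ⟨m-1, by omega⟩)) b hedge
      refine ⟨x, ?_⟩
      rintro ⟨iv, hlt⟩
      by_cases hi : iv < m - 1
      · show X.map (tri (m+1) iv _).op x = _
        rw [← hLow x iv (by omega), hxl]
        exact hb ⟨iv, hi⟩
      · have hiv : iv = m - 1 := by omega
        subst hiv
        have := hCup x
        rw [hxu] at this
        exact hEinj this.symm
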